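/- Let X and Y be two-dimensional real polyhedral normed linear spaces (the unit ball is a polygon). If a nonzero linear operator T : X → Y preserves Birkhoff-James orthogonality at two linearly independent extreme points of the unit ball of X, then T is bijective. -/

import Mathlib

open Module Set Metric Filter Topology

/-- Birkhoff-James orthogonality. -/
def BJOrth {X : Type*} [NormedAddCommGroup X] [NormedSpace ℝ X] (x y : X) : Prop :=
  ∀ t : ℝ, ‖x‖ ≤ ‖x + t • y‖

/-- A finite-dimensional normed space is polyhedral if its closed unit ball has
finitely many extreme points. -/
def IsPolyhedralSpace (X : Type*) [NormedAddCommGroup X] [NormedSpace ℝ X] : Prop :=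
  (Set.extremePoints ℝ (Metric.closedBall (0 : X) 1)).Finite

section Aux

variable {X : Type*} [NormedAddCommGroup X] [NormedSpace ℝ X]

lemma isClosed_segment'' (a b : X) : IsClosed (segment ℝ a b) := by
  rw [segment_eq_image ℝ a b]
  exact ((isCompact_Icc).image (by continuity)).isClosed

lemma extreme_norm_one [Nontrivial X]
    {u : X} (hu : u ∈ Set.extremePoints ℝ (Metric.closedBall (0:X) 1)) : ‖u‖ = 1 := by
  obtain ⟨huB, hext⟩ := mem_extremePoints.mp hu
  rw [mem_closedBall_zero_iff] at huB
  by_contra hne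
  have hlt : ‖u‖ < 1 := lt_of_le_of_ne huB hne
  obtain ⟨w, hw⟩ := exists_ne (0 : X)
  have hwpos : 0 < ‖w‖ := norm_pos_iff.mpr hw
  set ε : ℝ := (1 - ‖u‖) / ‖w‖ with hε
  have hεpos : 0 < ε := div_pos (by linarith) hwpos
  have h1 : u + ε • w ∈ Metric.closedBall (0:X) 1 := by
    rw [mem_closedBall_zero_iff]
    calc ‖u + ε • w‖ ≤ ‖u‖ + ‖ε • w‖ := norm_add_le _ _
      _ = ‖u‖ + ε * ‖w‖ := by rw [norm_smul, Real.norm_of_nonneg hεpos.le]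
      _ = 1 := by rw [hε, div_mul_cancel₀ _ hwpos.ne']; ring
  have h2 : u - ε • w ∈ Metric.closedBall (0:X) 1 := by
    rw [mem_closedBall_zero_iff]
    calc ‖u - ε • w‖ ≤ ‖u‖ + ‖ε • w‖ := norm_sub_le _ _
      _ = ‖u‖ + ε * ‖w‖ := by rw [norm_smul, Real.norm_of_nonneg hεpos.le]
      _ = 1 := by rw [hε, div_mul_cancel₀ _ hwpos.ne']; ring
  have hmem : u ∈ openSegment ℝ (u - ε • w) (u + ε • w) :=
    ⟨1/2, 1/2, by norm_num, by norm_num, by norm_num, by module⟩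
  have h3 := hext _ h2 _ h1 hmem
  have h4 : ε • w = 0 := by
    have := h3.1
    have h5 : u - ε • w - u = 0 := by rw [this]; abel
    have : -(ε • w) = 0 := by rw [← h5]; abel
    simpa using this
  rcases smul_eq_zero.mp h4 with h | h
  · exact hεpos.ne' h
  · exact hw h

lemma sphere_segment [FiniteDimensional ℝ X] (hdim : finrank ℝ X = 2)
    (hpX : IsPolyhedralSpace X) {x : X} (hx : ‖x‖ = 1) :
    ∃ e e', e ∈ Set.extremePoints ℝ (Metric.closedBall (0:X) 1) ∧
      e' ∈ Set.extremePoints ℝ (Metric.closedBall (0:X) 1) ∧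
      x ∈ segment ℝ e e' ∧ ∀ z ∈ segment ℝ e e', ‖z‖ = 1 := by
  set B := Metric.closedBall (0:X) 1 with hBdef
  set E := Set.extremePoints ℝ B with hEdef
  have hEfin : E.Finite := hpX
  have hEB : E ⊆ B := extremePoints_subset
  have hBconv : Convex ℝ B := convex_closedBall _ _
  have hBhull : B = convexHull ℝ E := by
    have h1 := closure_convexHull_extremePoints (isCompact_closedBall (0:X) 1) hBconv
    have h2 : IsClosed (convexHull ℝ E) := (hEfin.isCompact_convexHull (𝕜 := ℝ)).isClosed
    rw [h2.closure_eq] at h1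
    exact h1.symm
  have hx0 : x ≠ 0 := by intro h; rw [h, norm_zero] at hx; norm_num at hx
  obtain ⟨f, hf1, hfx⟩ := exists_dual_vector ℝ x (norm_ne_zero_iff.mpr hx0)
  have hfx1 : f x = 1 := by rw [hfx, hx]; norm_num
  have hfle : ∀ z ∈ B, f z ≤ 1 := by
    intro z hz
    rw [mem_closedBall_zero_iff] at hz
    calc f z ≤ |f z| := le_abs_self _
      _ = ‖f z‖ := (Real.norm_eq_abs _).symm
      _ ≤ ‖f‖ * ‖z‖ := f.le_opNorm z
      _ ≤ 1 := by rw [hf1, one_mul]; exact hz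
  have hxB : x ∈ B := mem_closedBall_zero_iff.mpr hx.le
  have hxE : x ∈ convexHull ℝ E := hBhull ▸ hxB
  rw [hEfin.convexHull_eq] at hxE
  obtain ⟨w, hw0, hwsum, hwx⟩ := hxE
  rw [Finset.centerMass_eq_of_sum_1 _ _ hwsum] at hwx
  classical
  set t := hEfin.toFinset with ht
  set S := t.filter (fun y => w y ≠ 0) with hS
  have hSsub : ∀ y ∈ S, y ∈ E := by
    intro y hy
    have := Finset.mem_filter.mp hy
    exact hEfin.mem_toFinset.mp this.1
  have hsumS : ∑ y ∈ S, w y = 1 := by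
    rw [hS, Finset.sum_filter_ne_zero]; exact hwsum
  have hxsum : ∑ y ∈ S, w y • y = x := by
    rw [hS, Finset.sum_filter_of_ne]
    · simpa using hwx
    · intro y _ h hwy; exact h (by rw [hwy, zero_smul])
  have hSne : S.Nonempty := by
    rcases Finset.eq_empty_or_nonempty S with h | h
    · rw [h, Finset.sum_empty] at hsumS; norm_num at hsumS
    · exact h
  have hSnonneg : ∀ y ∈ S, 0 ≤ w y := fun y hy => hw0 y (hSsub y hy)
  have hSf : ∀ y ∈ S, f y = 1 := by
    have hsum0 : ∑ y ∈ S, w y * (1 - f y) = 0 := by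
      have h1 : ∑ y ∈ S, w y * (1 - f y) = (∑ y ∈ S, w y) - f (∑ y ∈ S, w y • y) := by
        rw [map_sum]
        rw [← Finset.sum_sub_distrib]
        congr 1; ext y
        rw [map_smul, smul_eq_mul]; ring
      rw [h1, hsumS, hxsum, hfx1]; ring
    intro y hy
    have hterm := (Finset.sum_eq_zero_iff_of_nonneg (fun y hy => by
      have h2 := hfle y (hEB (hSsub y hy))
      have h3 := hSnonneg y hy
      nlinarith)).mp hsum0 y hy
    have hwy : w y ≠ 0 := (Finset.mem_filter.mp hy).2
    have : 1 - f y = 0 := by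
      rcases mul_eq_zero.mp hterm with h | h
      · exact absurd h hwy
      · exact h
    linarith
  -- kernel direction
  have hsurj : Function.Surjective (f : X →ₗ[ℝ] ℝ) := by
    intro r
    exact ⟨r • x, by simp [map_smul, hfx1, smul_eq_mul]⟩
  have hker1 : finrank ℝ (LinearMap.ker (f : X →ₗ[ℝ] ℝ)) = 1 := by
    have hr := LinearMap.finrank_range_add_finrank_ker (f : X →ₗ[ℝ] ℝ)
    rw [LinearMap.range_eq_top.mpr hsurj, finrank_top, finrank_self, hdim] at hr
    omega
  obtain ⟨⟨d, hdker⟩, hd0, hdspan⟩ := finrank_eq_one_iff'.mp hker1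
  have hdne : d ≠ 0 := by
    intro h; apply hd0; exact Subtype.ext h
  have hd : ∀ z : X, f z = 0 → ∃ c : ℝ, z = c • d := by
    intro z hz
    obtain ⟨c, hc⟩ := hdspan ⟨z, LinearMap.mem_ker.mpr (by simpa using hz)⟩
    exact ⟨c, by simpa using (congrArg Subtype.val hc).symm⟩
  obtain ⟨g, hg1, hgd⟩ := exists_dual_vector ℝ d (norm_ne_zero_iff.mpr hdne)
  have hgdpos : (0:ℝ) < g d := by rw [hgd]; simpa using norm_pos_iff.mpr hdne
  obtain ⟨e, heS, hemin⟩ := Finset.exists_min_image S (fun y => g y) hSne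
  obtain ⟨e', he'S, he'max⟩ := Finset.exists_max_image S (fun y => g y) hSne
  have heE := hSsub e heS
  have he'E := hSsub e' he'S
  -- sphere condition
  have hsph : ∀ z ∈ segment ℝ e e', ‖z‖ = 1 := by
    intro z hz
    obtain ⟨p, q, hp, hq, hpq, hzeq⟩ := hz
    have hzB : z ∈ B := hBconv.segment_subset (hEB heE) (hEB he'E) ⟨p, q, hp, hq, hpq, hzeq⟩
    have hzle : ‖z‖ ≤ 1 := mem_closedBall_zero_iff.mp hzB
    have hfz : f z = 1 := by
      rw [← hzeq, map_add, map_smul, map_smul, hSf e heS, hSf e' he'S, smul_eq_mul,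
        smul_eq_mul, mul_one, mul_one, hpq]
    have hge : 1 ≤ ‖z‖ := by
      calc (1:ℝ) = f z := hfz.symm
        _ ≤ |f z| := le_abs_self _
        _ = ‖f z‖ := (Real.norm_eq_abs _).symm
        _ ≤ ‖f‖ * ‖z‖ := f.le_opNorm z
        _ = ‖z‖ := by rw [hf1, one_mul]
    linarith
  -- x between e and e' in g-coordinate
  have hgx : g x = ∑ y ∈ S, w y * g y := by
    rw [← hxsum, map_sum]
    congr 1; ext y; rw [map_smul, smul_eq_mul]
  have hlo : g e ≤ g x := by
    rw [hgx]
    calc g e = (∑ y ∈ S, w y) * g e := by rw [hsumS, one_mul]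
      _ = ∑ y ∈ S, w y * g e := by rw [Finset.sum_mul]
      _ ≤ ∑ y ∈ S, w y * g y :=
        Finset.sum_le_sum (fun y hy => mul_le_mul_of_nonneg_left (hemin y hy) (hSnonneg y hy))
  have hhi : g x ≤ g e' := by
    rw [hgx]
    calc ∑ y ∈ S, w y * g y ≤ ∑ y ∈ S, w y * g e' :=
        Finset.sum_le_sum (fun y hy => mul_le_mul_of_nonneg_left (he'max y hy) (hSnonneg y hy))
      _ = (∑ y ∈ S, w y) * g e' := by rw [Finset.sum_mul]
      _ = g e' := by rw [hsumS, one_mul]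
  obtain ⟨a, ha⟩ := hd (x - e) (by rw [map_sub, hfx1, hSf e heS, sub_self])
  obtain ⟨b, hb⟩ := hd (e' - e) (by rw [map_sub, hSf e' he'S, hSf e heS, sub_self])
  have hga : g x - g e = a * g d := by rw [← map_sub, ha, map_smul, smul_eq_mul]
  have hgb : g e' - g e = b * g d := by rw [← map_sub, hb, map_smul, smul_eq_mul]
  have hanneg : 0 ≤ a := by nlinarith
  have hab : a ≤ b := by nlinarith
  by_cases hbz : b = 0
  · have haz : a = 0 := le_antisymm (by linarith) hanneg
    have hxe : x = e := by
      have : x - e = 0 := by rw [ha, haz, zero_smul]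
      have := sub_eq_zero.mp this; exact this
    exact ⟨e, e', heE, he'E, hxe ▸ left_mem_segment ℝ e e', hsph⟩
  · have hbpos : 0 < b := lt_of_le_of_ne (le_trans hanneg hab) (Ne.symm hbz)
    set τ := a / b with hτ
    have hτ0 : 0 ≤ τ := div_nonneg hanneg hbpos.le
    have hτ1 : τ ≤ 1 := (div_le_one hbpos).mpr hab
    have htx : τ • (e' - e) = x - e := by
      rw [hb, smul_smul, hτ, div_mul_cancel₀ _ hbz, ← ha]
    refine ⟨e, e', heE, he'E, ⟨1 - τ, τ, by linarith, hτ0, by ring, ?_⟩, hsph⟩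
    have h5 : (1 - τ) • e + τ • e' = e + τ • (e' - e) := by module
    rw [h5, htx]; abel

lemma bjorth_of_segment {u p : X} (hu1 : ‖u‖ = 1)
    (hseg : ∀ z ∈ segment ℝ u p, ‖z‖ = 1) : BJOrth u (p - u) := by
  intro t
  rw [hu1]
  rcases le_or_gt 0 t with ht0 | ht0
  · rcases le_or_gt t 1 with ht1 | ht1
    · have hmem : u + t • (p - u) ∈ segment ℝ u p :=
        ⟨1 - t, t, by linarith, ht0, by ring, by module⟩
      rw [hseg _ hmem]
    · -- t > 1
      have hp1 : ‖p‖ = 1 := hseg p (right_mem_segment ℝ u p)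
      have hid : t • p = (t - 1) • u + (u + t • (p - u)) := by module
      have h2 : t * ‖p‖ ≤ (t - 1) * ‖u‖ + ‖u + t • (p - u)‖ := by
        calc t * ‖p‖ = ‖t • p‖ := by rw [norm_smul, Real.norm_of_nonneg (by linarith)]
          _ = ‖(t - 1) • u + (u + t • (p - u))‖ := by rw [hid]
          _ ≤ ‖(t - 1) • u‖ + ‖u + t • (p - u)‖ := norm_add_le _ _
          _ = (t - 1) * ‖u‖ + ‖u + t • (p - u)‖ := by
              rw [norm_smul, Real.norm_of_nonneg (by linarith)]
      rw [hu1, hp1] at h2; linarith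
  · -- t < 0
    have hp1 : ‖p‖ = 1 := hseg p (right_mem_segment ℝ u p)
    have hid : (1 - t) • u = (-t) • p + (u + t • (p - u)) := by module
    have h2 : (1 - t) * ‖u‖ ≤ (-t) * ‖p‖ + ‖u + t • (p - u)‖ := by
      calc (1 - t) * ‖u‖ = ‖(1 - t) • u‖ := by
            rw [norm_smul, Real.norm_of_nonneg (by linarith)]
        _ = ‖(-t) • p + (u + t • (p - u))‖ := by rw [hid]
        _ ≤ ‖(-t) • p‖ + ‖u + t • (p - u)‖ := norm_add_le _ _
        _ = (-t) * ‖p‖ + ‖u + t • (p - u)‖ := by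
            rw [norm_smul, Real.norm_of_nonneg (by linarith)]
    rw [hu1, hp1] at h2; linarith

lemma exists_edge [FiniteDimensional ℝ X] (hdim : finrank ℝ X = 2)
    (hpX : IsPolyhedralSpace X) {u : X}
    (hu : u ∈ Set.extremePoints ℝ (Metric.closedBall (0:X) 1)) (hu1 : ‖u‖ = 1)
    (g : X →ₗ[ℝ] ℝ) (hgu : g u = 0) (w : X) (hgw : g w = 1) :
    ∃ p : X, (∀ z ∈ segment ℝ u p, ‖z‖ = 1) ∧ 0 < g (p - u) := by
  classical
  set E := Set.extremePoints ℝ (Metric.closedBall (0:X) 1) with hEdef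
  have hEB : E ⊆ Metric.closedBall (0:X) 1 := extremePoints_subset
  set s : ℕ → ℝ := fun n => 1 / ((n:ℝ) + 1) with hs
  have hspos : ∀ n, 0 < s n := fun n => by positivity
  have hgsum : ∀ n, g (u + s n • w) = s n := fun n => by
    rw [map_add, map_smul, hgu, hgw, smul_eq_mul]; ring
  have hne : ∀ n, u + s n • w ≠ 0 := by
    intro n h
    have := hgsum n
    rw [h, map_zero] at this
    exact (hspos n).ne this
  have hnpos : ∀ n, 0 < ‖u + s n • w‖ := fun n => norm_pos_iff.mpr (hne n)
  obtain ⟨x, hxnorm, hgx, hlim⟩ :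
      ∃ x : ℕ → X, (∀ n, ‖x n‖ = 1) ∧ (∀ n, 0 < g (x n)) ∧ Tendsto x atTop (𝓝 u) := by
    refine ⟨fun n => (‖u + s n • w‖)⁻¹ • (u + s n • w), fun n => ?_, fun n => ?_, ?_⟩
    · simp only [norm_smul, norm_inv, norm_norm]
      exact inv_mul_cancel₀ (hnpos n).ne'
    · have h1 : g ((‖u + s n • w‖)⁻¹ • (u + s n • w)) = (‖u + s n • w‖)⁻¹ * s n := by
        simp only [map_smul, smul_eq_mul]; rw [hgsum n]
      rw [h1]
      exact mul_pos (inv_pos.mpr (hnpos n)) (hspos n)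
    · have hs0 : Tendsto s atTop (𝓝 0) := tendsto_one_div_add_atTop_nhds_zero_nat
      have h1 : Tendsto (fun n => u + s n • w) atTop (𝓝 u) := by
        have h2 := hs0.smul_const w
        rw [zero_smul] at h2
        simpa using tendsto_const_nhds.add h2
      have h2 : Tendsto (fun n => ‖u + s n • w‖) atTop (𝓝 1) := by
        have := h1.norm
        rwa [hu1] at this
      have h3 : Tendsto (fun n => (‖u + s n • w‖)⁻¹) atTop (𝓝 1) := by
        have := h2.inv₀ one_ne_zero
        simpa using this
      have h4 := h3.smul h1
      rwa [one_smul] at h4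
  choose e e' heE he'E hseg hsph using fun n => sphere_segment hdim hpX (hxnorm n)
  haveI hfinEE : Finite ↑(E ×ˢ E) := (Set.Finite.prod hpX hpX).to_subtype
  set F : ℕ → ↑(E ×ˢ E) := fun n => ⟨(e n, e' n), Set.mk_mem_prod (heE n) (he'E n)⟩ with hF
  obtain ⟨⟨⟨a, b⟩, habE⟩, hinf⟩ := Finite.exists_infinite_fiber F
  have hinf' : (F ⁻¹' {⟨(a, b), habE⟩}).Infinite := Set.infinite_coe_iff.mp hinf
  have hmemfib : ∀ n ∈ F ⁻¹' {⟨(a, b), habE⟩}, e n = a ∧ e' n = b := by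
    intro n hn
    have h1 : F n = ⟨(a, b), habE⟩ := hn
    have h2 : (e n, e' n) = (a, b) := congrArg Subtype.val h1
    exact ⟨(Prod.ext_iff.mp h2).1, (Prod.ext_iff.mp h2).2⟩
  obtain ⟨n0, hn0⟩ := hinf'.nonempty
  obtain ⟨hea, he'b⟩ := hmemfib n0 hn0
  have hsphab : ∀ z ∈ segment ℝ a b, ‖z‖ = 1 := by rw [← hea, ← he'b]; exact hsph n0
  have hxn0 : x n0 ∈ segment ℝ a b := by rw [← hea, ← he'b]; exact hseg n0
  have hfreq : ∃ᶠ n in atTop, x n ∈ segment ℝ a b := by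
    rw [Nat.frequently_atTop_iff_infinite]
    apply hinf'.mono
    intro n hn
    obtain ⟨h1, h2⟩ := hmemfib n hn
    have := hseg n
    rw [h1, h2] at this
    exact this
  have huab : u ∈ segment ℝ a b := by
    have h1 := mem_closure_of_frequently_of_tendsto hfreq hlim
    rwa [(isClosed_segment'' a b).closure_eq] at h1
  have haB : a ∈ Metric.closedBall (0:X) 1 := hEB ((Set.mem_prod.mp habE).1)
  have hbB : b ∈ Metric.closedBall (0:X) 1 := hEB ((Set.mem_prod.mp habE).2)
  have hext := (mem_extremePoints.mp hu).2
  have hcases : u = a ∨ u = b := by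
    have h1 : u ∈ insert a (insert b (openSegment ℝ a b)) := by
      rw [insert_endpoints_openSegment]; exact huab
    rcases Set.mem_insert_iff.mp h1 with h | h
    · exact Or.inl h
    rcases Set.mem_insert_iff.mp h with h | h
    · exact Or.inr h
    · exact Or.inl ((hext a haB b hbB h).1.symm)
  rcases hcases with h | h
  · -- u = a, p := b
    refine ⟨b, by rw [h]; exact hsphab, ?_⟩
    obtain ⟨α, β, hα, hβ, hαβ, hxeq⟩ := hxn0
    have hxu : x n0 - u = β • (b - u) := by
      rw [← hxeq, h]
      have : α = 1 - β := by linarith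
      rw [this]; module
    have h2 : g (x n0) = β * g (b - u) := by
      have := congrArg g hxu
      rw [map_sub, hgu, sub_zero, map_smul, smul_eq_mul] at this
      exact this
    have h3 := hgx n0
    rw [h2] at h3
    nlinarith
  · -- u = b, p := a
    refine ⟨a, by rw [h, segment_symm]; exact hsphab, ?_⟩
    obtain ⟨α, β, hα, hβ, hαβ, hxeq⟩ := hxn0
    have hxu : x n0 - u = α • (a - u) := by
      rw [← hxeq, h]
      have : β = 1 - α := by linarith
      rw [this]; module
    have h2 : g (x n0) = α * g (a - u) := by
      have := congrArg g hxu
      rw [map_sub, hgu, sub_zero, map_smul, smul_eq_mul] at this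
      exact this
    have h3 := hgx n0
    rw [h2] at h3
    nlinarith

lemma corner [FiniteDimensional ℝ X] (hdim : finrank ℝ X = 2)
    (hpX : IsPolyhedralSpace X) {u : X}
    (hu : u ∈ Set.extremePoints ℝ (Metric.closedBall (0:X) 1)) :
    ∃ y₁ y₂ : X, LinearIndependent ℝ ![y₁, y₂] ∧ BJOrth u y₁ ∧ BJOrth u y₂ := by
  haveI : Nontrivial X := Module.nontrivial_of_finrank_pos (R := ℝ) (by rw [hdim]; norm_num)
  have hu1 : ‖u‖ = 1 := extreme_norm_one hu
  have hu0 : u ≠ 0 := by intro h; rw [h, norm_zero] at hu1; norm_num at hu1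
  obtain ⟨w, hw⟩ : ∃ w, w ∉ Submodule.span ℝ {u} := by
    by_contra h
    push_neg at h
    have htop : Submodule.span ℝ ({u} : Set X) = ⊤ := eq_top_iff.mpr fun z _ => h z
    have h2 : finrank ℝ ↥(Submodule.span ℝ ({u} : Set X)) = 2 := by
      rw [htop, finrank_top, hdim]
    rw [finrank_span_singleton hu0] at h2
    norm_num at h2
  have hindw : LinearIndependent ℝ ![u, w] := by
    rw [linearIndependent_fin2]
    constructor
    · simp only [Matrix.cons_val_one, Matrix.head_cons, Matrix.cons_val_zero]
      intro h; apply hw; rw [h]; exact zero_mem _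
    · intro a ha
      simp only [Matrix.cons_val_one, Matrix.head_cons, Matrix.cons_val_zero] at ha
      by_cases haz : a = 0
      · rw [haz, zero_smul] at ha; exact hu0 ha.symm
      · apply hw
        rw [Submodule.mem_span_singleton]
        exact ⟨a⁻¹, by rw [← ha, smul_smul, inv_mul_cancel₀ haz, one_smul]⟩
  let bb := basisOfLinearIndependentOfCardEqFinrank hindw (by simp [hdim])
  have hbb : ⇑bb = ![u, w] := coe_basisOfLinearIndependentOfCardEqFinrank _ _
  set g : X →ₗ[ℝ] ℝ := bb.coord 1 with hg
  have hgu : g u = 0 := by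
    have h1 : u = bb 0 := by rw [hbb]; simp
    rw [h1, hg, Basis.coord_apply, Basis.repr_self]
    simp
  have hgw : g w = 1 := by
    have h1 : w = bb 1 := by rw [hbb]; simp
    rw [h1, hg, Basis.coord_apply, Basis.repr_self]
    simp
  obtain ⟨p, hp, hgp⟩ := exists_edge hdim hpX hu hu1 g hgu w hgw
  obtain ⟨q, hq, hgq'⟩ := exists_edge hdim hpX hu hu1 (-g) (by simp [hgu]) (-w) (by simp [hgw])
  have hgq : g (q - u) < 0 := by
    have : (-g) (q - u) = -(g (q - u)) := by simp
    rw [this] at hgq'; linarith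
  refine ⟨p - u, q - u, ?_, bjorth_of_segment hu1 hp, bjorth_of_segment hu1 hq⟩
  rw [linearIndependent_fin2]
  constructor
  · simp only [Matrix.cons_val_one, Matrix.head_cons, Matrix.cons_val_zero]
    intro h
    rw [h, map_zero] at hgq
    norm_num at hgq
  · intro a ha
    simp only [Matrix.cons_val_one, Matrix.head_cons, Matrix.cons_val_zero] at ha
    have hga : a * g (q - u) = g (p - u) := by
      rw [← ha, map_smul, smul_eq_mul]
    have haneg : a < 0 := by nlinarith
    have h1a : (0:ℝ) < 1 - a := by linarith
    have hpB : p ∈ Metric.closedBall (0:X) 1 :=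
      mem_closedBall_zero_iff.mpr (hp p (right_mem_segment ℝ u p)).le
    have hqB : q ∈ Metric.closedBall (0:X) 1 :=
      mem_closedBall_zero_iff.mpr (hq q (right_mem_segment ℝ u q)).le
    have hp' : p = u + a • (q - u) := by rw [ha]; abel
    have hkey : (1 - a) • u = p - a • q := by rw [hp']; module
    have hmem : u ∈ openSegment ℝ p q := by
      refine ⟨1/(1-a), -a/(1-a), by positivity, div_pos (by linarith) h1a, ?_, ?_⟩
      · field_simp
        ring
      · have h2 : (1/(1-a)) • p + (-a/(1-a)) • q = (1/(1-a)) • (p - a • q) := by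
          match_scalars <;> field_simp
        rw [h2, ← hkey, smul_smul, one_div_mul_cancel h1a.ne', one_smul]
    have hPQ := (mem_extremePoints.mp hu).2 p hpB q hqB hmem
    rw [hPQ.1] at hgp
    simp at hgp

end Aux

theorem stmt_17 {X Y : Type*} [NormedAddCommGroup X] [NormedSpace ℝ X]
    [NormedAddCommGroup Y] [NormedSpace ℝ Y]
    (hX : Module.finrank ℝ X = 2) (hY : Module.finrank ℝ Y = 2)
    (hpX : IsPolyhedralSpace X) (hpY : IsPolyhedralSpace Y)
    (T : X →L[ℝ] Y) (hT : T ≠ 0)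
    (u v : X) (hu : u ∈ Set.extremePoints ℝ (Metric.closedBall (0 : X) 1))
    (hv : v ∈ Set.extremePoints ℝ (Metric.closedBall (0 : X) 1))
    (hind : LinearIndependent ℝ ![u, v])
    (hpu : ∀ y : X, BJOrth u y → BJOrth (T u) (T y))
    (hpv : ∀ y : X, BJOrth v y → BJOrth (T v) (T y)) :
    Function.Bijective T := by
  haveI : FiniteDimensional ℝ X := FiniteDimensional.of_finrank_eq_succ hX
  haveI : FiniteDimensional ℝ Y := FiniteDimensional.of_finrank_eq_succ hY
  have hrangeuv : ∀ z : X, z ∈ Submodule.span ℝ ({u, v} : Set X) := by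
    have hspan := hind.span_eq_top_of_card_eq_finrank (by simp [hX])
    have hre : Set.range ![u, v] = ({u, v} : Set X) := by
      ext z; simp [Matrix.range_cons, Matrix.range_empty]; tauto
    rw [hre] at hspan
    intro z; rw [hspan]; trivial
  have aux : ∀ e : X, e ∈ Set.extremePoints ℝ (Metric.closedBall (0:X) 1) →
      (∀ y : X, BJOrth e y → BJOrth (T e) (T y)) → T e ≠ 0 →
      ∀ x : X, T x = 0 → x = 0 := by
    intro e he hpe hTe x hTx
    by_contra hx0
    obtain ⟨y₁, y₂, hindy, hb1, hb2⟩ := corner hX hpX he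
    have he0 : e ≠ 0 := fun h => hTe (by rw [h, map_zero])
    have hxe : LinearIndependent ℝ ![x, e] := by
      rw [linearIndependent_fin2]
      constructor
      · simpa using he0
      · intro a ha
        simp only [Matrix.cons_val_one, Matrix.head_cons, Matrix.cons_val_zero] at ha
        apply hx0
        have : T x = a • T e := by rw [← ha, map_smul]
        rw [hTx] at this
        have haz : a = 0 := by
          rcases smul_eq_zero.mp this.symm with h | h
          · exact h
          · exact absurd h hTe
        rw [← ha, haz, zero_smul]
    have hspan2 : ∀ z : X, z ∈ Submodule.span ℝ ({x, e} : Set X) := by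
      have hspan := hxe.span_eq_top_of_card_eq_finrank (by simp [hX])
      have hre : Set.range ![x, e] = ({x, e} : Set X) := by
        ext z; simp [Matrix.range_cons, Matrix.range_empty]; tauto
      rw [hre] at hspan
      intro z; rw [hspan]; trivial
    have hTy : ∀ y : X, BJOrth (T e) (T y) → ∃ c : ℝ, y = c • x := by
      intro y hby
      obtain ⟨c1, c2, hc⟩ := Submodule.mem_span_pair.mp (hspan2 y)
      have hTy2 : T y = c2 • T e := by
        rw [← hc]; simp [map_add, map_smul, hTx]
      by_cases hc2 : c2 = 0
      · exact ⟨c1, by rw [← hc, hc2, zero_smul, add_zero]⟩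
      · exfalso
        have hb := hby (-c2⁻¹)
        rw [hTy2] at hb
        have h0 : T e + (-c2⁻¹) • c2 • T e = 0 := by
          rw [smul_smul, show -c2⁻¹ * c2 = -1 by field_simp, neg_one_smul]
          abel
        rw [h0, norm_zero] at hb
        exact hTe (norm_le_zero_iff.mp hb)
    obtain ⟨c1, h1⟩ := hTy y₁ (hpe y₁ hb1)
    obtain ⟨c2, h2⟩ := hTy y₂ (hpe y₂ hb2)
    rw [linearIndependent_fin2] at hindy
    have hy2 : y₂ ≠ 0 := by simpa using hindy.1
    have hc2 : c2 ≠ 0 := fun h => hy2 (by rw [h2, h, zero_smul])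
    apply hindy.2 (c1 / c2)
    simp only [Matrix.cons_val_one, Matrix.head_cons, Matrix.cons_val_zero]
    rw [h2, smul_smul, div_mul_cancel₀ _ hc2, ← h1]
  have hinj : Function.Injective T := by
    rw [injective_iff_map_eq_zero]
    intro x hTx
    by_cases hTu : T u = 0
    · by_cases hTv : T v = 0
      · exfalso
        apply hT
        ext z
        obtain ⟨a, b, hz⟩ := Submodule.mem_span_pair.mp (hrangeuv z)
        rw [← hz]
        simp [map_add, map_smul, hTu, hTv]
      · exact aux v hv hpv hTv x hTx
    · exact aux u hu hpu hTu x hTx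
  refine ⟨hinj, ?_⟩
  have h1 : Function.Injective (T : X →ₗ[ℝ] Y) := hinj
  have h2 := (LinearMap.injective_iff_surjective_of_finrank_eq_finrank
    (f := (T : X →ₗ[ℝ] Y)) (by rw [hX, hY])).mp h1
  exact h2
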